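/- Let ℓ ≥ 1, let {X, U_1,…,U_{ℓ+1}, V_1,…,V_{ℓ+1}, Y} be a basis of ℝ^{2ℓ+4}, and let c ∈ ℝ. Let g be the symmetric bilinear form with g(X,X) = c, g(X,Y) = 1, g(U_a,V_b) = δ_{ab}, all other products 0, and let R be the 4-linear form whose only nonzero components, up to the symmetries R(x_1,x_2,x_3,x_4) = −R(x_2,x_1,x_3,x_4) = −R(x_1,x_2,x_4,x_3) = R(x_3,x_4,x_1,x_2), are R(X,U_1,U_1,X) = 1 and, for 2 ≤ a ≤ ℓ+1, R(X,U_a,U_a,X) = R(X,U_a,U_{a−1},X) = R(X,U_a,V_{a−1},X) = 1. Then for every pair f_1, f_2 with g(f_1,f_1) = ±1, g(f_2,f_2) = ±1 and g(f_1,f_2) = 0, the skew-symmetric curvature operator satisfies ℛ(f_1,f_2)³ = 0; moreover there exists such a pair with ℛ(f_1,f_2)² ≠ 0. -/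

import Mathlib

set_option maxHeartbeats 2000000

private noncomputable def ipTheta (l w1 w2 : ℕ) : ℝ :=
  if (w1 = w2 ∧ 1 ≤ w1 ∧ w1 ≤ l+1) ∨ (w1 = w2+1 ∧ 1 ≤ w2 ∧ w2 ≤ l) ∨
     (w2 = w1+1 ∧ 1 ≤ w1 ∧ w1 ≤ l) ∨ (w2 = w1+l ∧ 2 ≤ w1 ∧ w1 ≤ l+1) ∨
     (w1 = w2+l ∧ 2 ≤ w2 ∧ w2 ≤ l+1) then 1 else 0

private theorem ipLtY (l : ℕ) : 2*l+3 < 2*l+4 := by omega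
private theorem ipLt0 (l : ℕ) : 0 < 2*l+4 := by omega
private theorem ipLtU (l : ℕ) (i : Fin (2*l+4)) (h : i.1 ≤ l+1) : l+1+i.1 < 2*l+4 := by omega
private theorem ipLtV (l : ℕ) (i : Fin (2*l+4)) : i.1 - (l+1) < 2*l+4 := by omega

private noncomputable def ipD (l : ℕ) (b : Module.Basis (Fin (2*l+4)) ℝ (Fin (2*l+4) → ℝ)) (c : ℝ)
    (i : Fin (2*l+4)) : Fin (2*l+4) → ℝ :=
  if i.1 = 0 then b ⟨2*l+3, ipLtY l⟩
  else if i.1 = 2*l+3 then b ⟨0, ipLt0 l⟩ - c • b ⟨2*l+3, ipLtY l⟩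
  else if h : i.1 ≤ l+1 then b ⟨l+1+i.1, ipLtU l i h⟩
  else b ⟨i.1 - (l+1), ipLtV l i⟩
/-- the even-dimensional Ivanov-Petrova example. On `ℝ^{2ℓ+4}` with basis
`X = b 0`, `U_a = b a` (`1 ≤ a ≤ ℓ+1`), `V_a = b (ℓ+1+a)` (`1 ≤ a ≤ ℓ+1`), `Y = b (2ℓ+3)`,
take `g(X,X) = c`, `g(X,Y) = 1`, `g(U_a,V_b) = δ_{ab}`, all other products `0`, and the
4-linear form `R` whose only nonzero components up to the usual symmetries are
`R(X,U₁,U₁,X) = 1` and, for `2 ≤ a ≤ ℓ+1`,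
`R(X,U_a,U_a,X) = R(X,U_a,U_{a-1},X) = R(X,U_a,V_{a-1},X) = 1`. Then the skew-symmetric
curvature operator satisfies `ℛ(f₁,f₂)³ = 0` for every orthonormal pair `(f₁,f₂)`, and
`ℛ(f₁,f₂)² ≠ 0` for some such pair. -/
theorem ip_nilpotent_order_three_even_dim (l : ℕ) (hl : 1 ≤ l)
    (b : Module.Basis (Fin (2 * l + 4)) ℝ (Fin (2 * l + 4) → ℝ)) (c : ℝ)
    (g : (Fin (2 * l + 4) → ℝ) →ₗ[ℝ] (Fin (2 * l + 4) → ℝ) →ₗ[ℝ] ℝ)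
    (hgsym : ∀ v w, g v w = g w v)
    (hgXX : g (b ⟨0, by omega⟩) (b ⟨0, by omega⟩) = c)
    (hgXY : g (b ⟨0, by omega⟩) (b ⟨2 * l + 3, by omega⟩) = 1)
    (hgUV : ∀ (a a' : ℕ) (ha : 1 ≤ a) (ha' : a ≤ l + 1) (hb : 1 ≤ a') (hb' : a' ≤ l + 1),
      g (b ⟨a, by omega⟩) (b ⟨l + 1 + a', by omega⟩) = if a = a' then 1 else 0)
    (hg0 : ∀ i j : Fin (2 * l + 4),
      ¬((i.1 = 0 ∧ j.1 = 0) ∨ (i.1 = 0 ∧ j.1 = 2 * l + 3) ∨ (j.1 = 0 ∧ i.1 = 2 * l + 3) ∨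
        (1 ≤ i.1 ∧ i.1 ≤ l + 1 ∧ j.1 = l + 1 + i.1) ∨
        (1 ≤ j.1 ∧ j.1 ≤ l + 1 ∧ i.1 = l + 1 + j.1)) →
      g (b i) (b j) = 0)
    (R : MultilinearMap ℝ (fun _ : Fin 4 => (Fin (2 * l + 4) → ℝ)) ℝ)
    (hsym1 : ∀ x₁ x₂ x₃ x₄, R ![x₁, x₂, x₃, x₄] = -R ![x₂, x₁, x₃, x₄])
    (hsym2 : ∀ x₁ x₂ x₃ x₄, R ![x₁, x₂, x₃, x₄] = -R ![x₁, x₂, x₄, x₃])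
    (hsym3 : ∀ x₁ x₂ x₃ x₄, R ![x₁, x₂, x₃, x₄] = R ![x₃, x₄, x₁, x₂])
    (hval1 : R ![b ⟨0, by omega⟩, b ⟨1, by omega⟩, b ⟨1, by omega⟩, b ⟨0, by omega⟩] = 1)
    (hval2 : ∀ (a : ℕ) (ha : 2 ≤ a) (ha' : a ≤ l + 1),
      R ![b ⟨0, by omega⟩, b ⟨a, by omega⟩, b ⟨a, by omega⟩, b ⟨0, by omega⟩] = 1)
    (hval3 : ∀ (a : ℕ) (ha : 2 ≤ a) (ha' : a ≤ l + 1),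
      R ![b ⟨0, by omega⟩, b ⟨a, by omega⟩, b ⟨a - 1, by omega⟩, b ⟨0, by omega⟩] = 1)
    (hval4 : ∀ (a : ℕ) (ha : 2 ≤ a) (ha' : a ≤ l + 1),
      R ![b ⟨0, by omega⟩, b ⟨a, by omega⟩, b ⟨l + a, by omega⟩, b ⟨0, by omega⟩] = 1)
    (hvanish : ∀ i₁ i₂ i₃ i₄ : Fin (2 * l + 4),
      ¬(∃ w₁ w₂ : ℕ,
        ((i₁.1 = 0 ∧ i₂.1 = w₁) ∨ (i₂.1 = 0 ∧ i₁.1 = w₁)) ∧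
        ((i₃.1 = 0 ∧ i₄.1 = w₂) ∨ (i₄.1 = 0 ∧ i₃.1 = w₂)) ∧
        ((w₁ = 1 ∧ w₂ = 1) ∨
         ∃ a : ℕ, 2 ≤ a ∧ a ≤ l + 1 ∧
           ((w₁ = a ∧ w₂ = a) ∨ (w₁ = a ∧ w₂ = a - 1) ∨ (w₁ = a - 1 ∧ w₂ = a) ∨
            (w₁ = a ∧ w₂ = l + a) ∨ (w₁ = l + a ∧ w₂ = a)))) →
      R ![b i₁, b i₂, b i₃, b i₄] = 0) :
    (∀ f₁ f₂ : Fin (2 * l + 4) → ℝ,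
      (g f₁ f₁ = 1 ∨ g f₁ f₁ = -1) → (g f₂ f₂ = 1 ∨ g f₂ f₂ = -1) → g f₁ f₂ = 0 →
      ∀ Rop : Module.End ℝ (Fin (2 * l + 4) → ℝ),
        (∀ y z, g (Rop y) z = R ![f₁, f₂, y, z]) → Rop ^ 3 = 0) ∧
    (∃ f₁ f₂ : Fin (2 * l + 4) → ℝ,
      (g f₁ f₁ = 1 ∨ g f₁ f₁ = -1) ∧ (g f₂ f₂ = 1 ∨ g f₂ f₂ = -1) ∧ g f₁ f₂ = 0 ∧
      ∀ Rop : Module.End ℝ (Fin (2 * l + 4) → ℝ),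
        (∀ y z, g (Rop y) z = R ![f₁, f₂, y, z]) → Rop ^ 2 ≠ 0) := by
  classical
  have hn4 : 0 < 2*l+4 := by omega
  have hnY : 2*l+3 < 2*l+4 := by omega
  -- basic consequences of the symmetries
  have hR12 : ∀ x y z : Fin (2*l+4) → ℝ, R ![x,x,y,z] = 0 := by
    intro x y z; have := hsym1 x x y z; linarith
  have hR34 : ∀ x y z : Fin (2*l+4) → ℝ, R ![x,y,z,z] = 0 := by
    intro x y z; have := hsym2 x y z z; linarith
  -- update lemmas for 4-tuples
  have upd0 : ∀ x1 x2 x3 x4 v : Fin (2*l+4) → ℝ,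
      Function.update ![x1,x2,x3,x4] (0:Fin 4) v = ![v,x2,x3,x4] := by
    intro x1 x2 x3 x4 v; funext j; fin_cases j <;> simp
  have upd1 : ∀ x1 x2 x3 x4 v : Fin (2*l+4) → ℝ,
      Function.update ![x1,x2,x3,x4] (1:Fin 4) v = ![x1,v,x3,x4] := by
    intro x1 x2 x3 x4 v; funext j; fin_cases j <;> simp
  have upd2 : ∀ x1 x2 x3 x4 v : Fin (2*l+4) → ℝ,
      Function.update ![x1,x2,x3,x4] (2:Fin 4) v = ![x1,x2,v,x4] := by
    intro x1 x2 x3 x4 v; funext j; fin_cases j <;> simp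
  have upd3 : ∀ x1 x2 x3 x4 v : Fin (2*l+4) → ℝ,
      Function.update ![x1,x2,x3,x4] (3:Fin 4) v = ![x1,x2,x3,v] := by
    intro x1 x2 x3 x4 v; funext j; fin_cases j <;> simp
  -- multilinearity in each slot
  have Rsum0 : ∀ (v : Fin (2*l+4) → Fin (2*l+4) → ℝ) (x2 x3 x4 : Fin (2*l+4) → ℝ),
      R ![∑ i, v i, x2, x3, x4] = ∑ i, R ![v i, x2, x3, x4] := by
    intro v x2 x3 x4
    have := R.map_update_sum Finset.univ (0 : Fin 4) v ![0, x2, x3, x4]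
    simpa only [upd0] using this
  have Rsum1 : ∀ (v : Fin (2*l+4) → Fin (2*l+4) → ℝ) (x1 x3 x4 : Fin (2*l+4) → ℝ),
      R ![x1, ∑ i, v i, x3, x4] = ∑ i, R ![x1, v i, x3, x4] := by
    intro v x1 x3 x4
    have := R.map_update_sum Finset.univ (1 : Fin 4) v ![x1, 0, x3, x4]
    simpa only [upd1] using this
  have Rsum2 : ∀ (v : Fin (2*l+4) → Fin (2*l+4) → ℝ) (x1 x2 x4 : Fin (2*l+4) → ℝ),
      R ![x1, x2, ∑ i, v i, x4] = ∑ i, R ![x1, x2, v i, x4] := by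
    intro v x1 x2 x4
    have := R.map_update_sum Finset.univ (2 : Fin 4) v ![x1, x2, 0, x4]
    simpa only [upd2] using this
  have Rsum3 : ∀ (v : Fin (2*l+4) → Fin (2*l+4) → ℝ) (x1 x2 x3 : Fin (2*l+4) → ℝ),
      R ![x1, x2, x3, ∑ i, v i] = ∑ i, R ![x1, x2, x3, v i] := by
    intro v x1 x2 x3
    have := R.map_update_sum Finset.univ (3 : Fin 4) v ![x1, x2, x3, 0]
    simpa only [upd3] using this
  have Rsmul0 : ∀ (r : ℝ) (x1 x2 x3 x4 : Fin (2*l+4) → ℝ),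
      R ![r • x1, x2, x3, x4] = r * R ![x1, x2, x3, x4] := by
    intro r x1 x2 x3 x4
    have := R.map_update_smul ![x1,x2,x3,x4] (0 : Fin 4) r x1
    simpa only [upd0, smul_eq_mul] using this
  have Rsmul1 : ∀ (r : ℝ) (x1 x2 x3 x4 : Fin (2*l+4) → ℝ),
      R ![x1, r • x2, x3, x4] = r * R ![x1, x2, x3, x4] := by
    intro r x1 x2 x3 x4
    have := R.map_update_smul ![x1,x2,x3,x4] (1 : Fin 4) r x2
    simpa only [upd1, smul_eq_mul] using this
  have Radd0 : ∀ (x1 x1' x2 x3 x4 : Fin (2*l+4) → ℝ),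
      R ![x1 + x1', x2, x3, x4] = R ![x1, x2, x3, x4] + R ![x1', x2, x3, x4] := by
    intro x1 x1' x2 x3 x4
    have := R.map_update_add ![x1,x2,x3,x4] (0 : Fin 4) x1 x1'
    simpa only [upd0] using this
  have Radd1 : ∀ (x1 x2 x2' x3 x4 : Fin (2*l+4) → ℝ),
      R ![x1, x2 + x2', x3, x4] = R ![x1, x2, x3, x4] + R ![x1, x2', x3, x4] := by
    intro x1 x2 x2' x3 x4
    have := R.map_update_add ![x1,x2,x3,x4] (1 : Fin 4) x2 x2'
    simpa only [upd1] using this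
  -- expansion in a basis, slot by slot
  have Rexp0 : ∀ x1 x2 x3 x4 : Fin (2*l+4) → ℝ,
      R ![x1,x2,x3,x4] = ∑ i, b.repr x1 i * R ![b i, x2, x3, x4] := by
    intro x1 x2 x3 x4
    conv_lhs => rw [← b.sum_repr x1]
    rw [Rsum0]
    exact Finset.sum_congr rfl fun i _ => Rsmul0 _ _ _ _ _
  have Rexp1 : ∀ x1 x2 x3 x4 : Fin (2*l+4) → ℝ,
      R ![x1,x2,x3,x4] = ∑ i, b.repr x2 i * R ![x1, b i, x3, x4] := by
    intro x1 x2 x3 x4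
    conv_lhs => rw [← b.sum_repr x2]
    rw [Rsum1]
    exact Finset.sum_congr rfl fun i _ => Rsmul1 _ _ _ _ _
  have Rexp2 : ∀ x1 x2 x3 x4 : Fin (2*l+4) → ℝ,
      R ![x1,x2,x3,x4] = ∑ i, b.repr x3 i * R ![x1, x2, b i, x4] := by
    intro x1 x2 x3 x4
    conv_lhs => rw [← b.sum_repr x3]
    rw [Rsum2]
    refine Finset.sum_congr rfl fun i _ => ?_
    have := R.map_update_smul ![x1,x2,b i,x4] (2 : Fin 4) (b.repr x3 i) (b i)
    simpa only [upd2, smul_eq_mul] using this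
  have Rexp3 : ∀ x1 x2 x3 x4 : Fin (2*l+4) → ℝ,
      R ![x1,x2,x3,x4] = ∑ i, b.repr x4 i * R ![x1, x2, x3, b i] := by
    intro x1 x2 x3 x4
    conv_lhs => rw [← b.sum_repr x4]
    rw [Rsum3]
    refine Finset.sum_congr rfl fun i _ => ?_
    have := R.map_update_smul ![x1,x2,x3,b i] (3 : Fin 4) (b.repr x4 i) (b i)
    simpa only [upd3, smul_eq_mul] using this
  have vmk : ∀ (k : ℕ) (h : k < 2*l+4), ((⟨k, h⟩ : Fin (2*l+4)) : ℕ) = k := fun _ _ => rfl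
  -- collapsing sums
  have coll : ∀ (F : Fin (2*l+4) → ℝ) (k : ℕ) (hk : k < 2*l+4),
      (∑ j, F j * (if j.1 = k then (1:ℝ) else 0)) = F ⟨k, hk⟩ := by
    intro F k hk
    rw [Finset.sum_eq_single (⟨k, hk⟩ : Fin (2*l+4))]
    · rw [if_pos rfl, mul_one]
    · intro j _ hj
      rw [if_neg (fun h => hj (Fin.ext h)), mul_zero]
    · intro h; exact absurd (Finset.mem_univ _) h
  have coll1 : ∀ (k : ℕ), k < 2*l+4 →
      (∑ j : Fin (2*l+4), (if j.1 = k then (1:ℝ) else 0)) = 1 := by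
    intro k hk
    rw [Finset.sum_eq_single (⟨k, hk⟩ : Fin (2*l+4))]
    · rw [if_pos rfl]
    · intro j _ hj
      rw [if_neg (fun h => hj (Fin.ext h))]
    · intro h; exact absurd (Finset.mem_univ _) h
  -- the table of g on basis vectors
  have gY : ∀ j : Fin (2*l+4), g (b j) (b ⟨2*l+3, hnY⟩) = if j.1 = 0 then 1 else 0 := by
    intro j
    by_cases hj : j.1 = 0
    · rw [if_pos hj]
      have : j = ⟨0, hn4⟩ := Fin.ext hj
      rw [this]; exact hgXY
    · rw [if_neg hj]
      exact hg0 j ⟨2*l+3, hnY⟩ (by simp only [vmk]; omega)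
  have gX : ∀ j : Fin (2*l+4), g (b j) (b ⟨0, hn4⟩) =
      if j.1 = 0 then c else if j.1 = 2*l+3 then 1 else 0 := by
    intro j
    by_cases hj : j.1 = 0
    · rw [if_pos hj]
      have : j = ⟨0, hn4⟩ := Fin.ext hj
      rw [this]; exact hgXX
    · by_cases hj2 : j.1 = 2*l+3
      · rw [if_neg hj, if_pos hj2]
        have : j = ⟨2*l+3, hnY⟩ := Fin.ext hj2
        rw [this, hgsym]; exact hgXY
      · rw [if_neg hj, if_neg hj2]
        exact hg0 j ⟨0, hn4⟩ (by simp only [vmk]; omega)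
  have gV : ∀ (a : ℕ) (ha : 1 ≤ a) (ha' : a ≤ l+1) (j : Fin (2*l+4)),
      g (b j) (b ⟨l+1+a, by omega⟩) = if j.1 = a then 1 else 0 := by
    intro a ha ha' j
    by_cases hj : j.1 = a
    · rw [if_pos hj]
      have : j = ⟨a, by omega⟩ := Fin.ext hj
      rw [this]
      have := hgUV a a ha ha' ha ha'
      rw [if_pos rfl] at this; exact this
    · rw [if_neg hj]
      exact hg0 j ⟨l+1+a, by omega⟩ (by simp only [vmk]; omega)
  have gU : ∀ (a : ℕ) (ha : 1 ≤ a) (ha' : a ≤ l+1) (j : Fin (2*l+4)),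
      g (b j) (b ⟨a, by omega⟩) = if j.1 = l+1+a then 1 else 0 := by
    intro a ha ha' j
    by_cases hj : j.1 = l+1+a
    · rw [if_pos hj]
      have : j = ⟨l+1+a, by omega⟩ := Fin.ext hj
      rw [this, hgsym]
      have := hgUV a a ha ha' ha ha'
      rw [if_pos rfl] at this; exact this
    · rw [if_neg hj]
      exact hg0 j ⟨a, by omega⟩ (by simp only [vmk]; omega)
  -- expansion of g in the basis  (first argument)
  have geval : ∀ (v w : Fin (2*l+4) → ℝ), g v w = ∑ i, b.repr v i * g (b i) w := by
    intro v w
    conv_lhs => rw [← b.sum_repr v]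
    rw [map_sum, LinearMap.sum_apply]
    refine Finset.sum_congr rfl fun i _ => ?_
    rw [map_smul, LinearMap.smul_apply, smul_eq_mul]
  -- nondegeneracy of g
  have nondeg : ∀ v : Fin (2*l+4) → ℝ, (∀ w, g v w = 0) → v = 0 := by
    intro v hv
    have h0 : b.repr v ⟨0, hn4⟩ = 0 := by
      have h := hv (b ⟨2*l+3, hnY⟩)
      rw [geval] at h
      simp only [gY] at h
      rwa [coll (fun j => b.repr v j) 0 hn4] at h
    have hY : b.repr v ⟨2*l+3, hnY⟩ = 0 := by
      have h := hv (b ⟨0, hn4⟩)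
      rw [geval] at h
      simp only [gX] at h
      have heq : ∀ j : Fin (2*l+4), b.repr v j *
          (if j.1 = 0 then c else if j.1 = 2*l+3 then 1 else 0)
          = (b.repr v j * c) * (if j.1 = 0 then (1:ℝ) else 0)
            + b.repr v j * (if j.1 = 2*l+3 then (1:ℝ) else 0) := by
        intro j
        split_ifs <;> first | omega | ring
      rw [Finset.sum_congr rfl (fun j _ => heq j), Finset.sum_add_distrib,
        coll (fun j => b.repr v j * c) 0 hn4, coll (fun j => b.repr v j) (2*l+3) hnY] at h
      simp only [h0, zero_mul, zero_add] at h
      exact h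
    have hall : ∀ i : Fin (2*l+4), b.repr v i = 0 := by
      intro i
      rcases Nat.lt_or_ge i.1 1 with hi | hi
      · have : i = ⟨0, hn4⟩ := Fin.ext (by simp only [vmk]; omega)
        rw [this]; exact h0
      rcases Nat.lt_or_ge i.1 (l+2) with hi2 | hi2
      · -- U range
        have h := hv (b ⟨l+1+i.1, by omega⟩)
        rw [geval] at h
        simp only [gV i.1 hi (by omega)] at h
        rw [coll (fun j => b.repr v j) i.1 (by omega)] at h
        rwa [show (⟨i.1, by omega⟩ : Fin (2*l+4)) = i from Fin.ext rfl] at h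
      rcases Nat.lt_or_ge i.1 (2*l+3) with hi3 | hi3
      · -- V range
        have h := hv (b ⟨i.1 - (l+1), by omega⟩)
        rw [geval] at h
        simp only [gU (i.1 - (l+1)) (by omega) (by omega)] at h
        rw [coll (fun j => b.repr v j) (l+1+(i.1-(l+1))) (by omega)] at h
        rwa [show (⟨l+1+(i.1-(l+1)), by omega⟩ : Fin (2*l+4)) = i from
          Fin.ext (by simp only [vmk]; omega)] at h
      · have : i = ⟨2*l+3, hnY⟩ := Fin.ext (by simp only [vmk]; omega)
        rw [this]; exact hY
    have : b.repr v = 0 := by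
      ext i; exact hall i
    calc v = b.repr.symm (b.repr v) := (b.repr.symm_apply_apply v).symm
    _ = 0 := by rw [this]; exact map_zero _
  -- convenient basis-vector congruence
  have bcongr : ∀ (i : Fin (2*l+4)) (k : ℕ) (hk : k < 2*l+4), i.1 = k → b i = b ⟨k, hk⟩ := by
    intro i k hk h; congr 1; exact Fin.ext h
  have hRswap : ∀ x u v : Fin (2*l+4) → ℝ, R ![x, u, v, x] = R ![x, v, u, x] := by
    intro x u v
    rw [hsym3 x u v x, hsym1 v x x u, hsym2 x v x u, neg_neg]
  -- R on basis vectors with outer X's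
  have Rb0 : ∀ (w1 w2 : Fin (2*l+4)), w1.1 ≠ 0 →
      R ![b ⟨0, hn4⟩, b w1, b w2, b ⟨0, hn4⟩] = ipTheta l w1.1 w2.1 := by
    intro w1 w2 hw1
    by_cases hP : (w1.1 = w2.1 ∧ 1 ≤ w1.1 ∧ w1.1 ≤ l+1) ∨ (w1.1 = w2.1+1 ∧ 1 ≤ w2.1 ∧ w2.1 ≤ l) ∨
        (w2.1 = w1.1+1 ∧ 1 ≤ w1.1 ∧ w1.1 ≤ l) ∨ (w2.1 = w1.1+l ∧ 2 ≤ w1.1 ∧ w1.1 ≤ l+1) ∨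
        (w1.1 = w2.1+l ∧ 2 ≤ w2.1 ∧ w2.1 ≤ l+1)
    · rw [ipTheta, if_pos hP]
      rcases hP with ⟨h1,h2,h3⟩ | ⟨h1,h2,h3⟩ | ⟨h1,h2,h3⟩ | ⟨h1,h2,h3⟩ | ⟨h1,h2,h3⟩
      · rcases Nat.lt_or_ge w1.1 2 with hc | hc
        · rw [bcongr w1 1 (by omega) (by omega), bcongr w2 1 (by omega) (by omega)]
          exact hval1
        · rw [bcongr w1 w1.1 (by omega) rfl, bcongr w2 w1.1 (by omega) (by omega)]
          exact hval2 w1.1 hc h3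
      · rw [bcongr w1 w1.1 (by omega) rfl,
          bcongr w2 (w1.1 - 1) (by omega) (by omega)]
        exact hval3 w1.1 (by omega) (by omega)
      · rw [hRswap, bcongr w2 w2.1 (by omega) rfl,
          bcongr w1 (w2.1 - 1) (by omega) (by omega)]
        exact hval3 w2.1 (by omega) (by omega)
      · rw [bcongr w1 w1.1 (by omega) rfl,
          bcongr w2 (l + w1.1) (by omega) (by omega)]
        exact hval4 w1.1 h2 h3
      · rw [hRswap, bcongr w2 w2.1 (by omega) rfl,
          bcongr w1 (l + w2.1) (by omega) (by omega)]
        exact hval4 w2.1 h2 h3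
    · rw [ipTheta, if_neg hP]
      refine hvanish _ _ _ _ ?_
      rintro ⟨w1', w2', hA, hB, hC⟩
      simp only [vmk] at hA hB
      rcases hC with ⟨hc1, hc2⟩ | ⟨a, ha1, ha2, hc⟩ <;> omega
  -- R with three basis slots, last slot X
  have Rbval : ∀ i1 i2 i3 : Fin (2*l+4),
      R ![b i1, b i2, b i3, b ⟨0, hn4⟩] =
        (if i1.1 = 0 then ipTheta l i2.1 i3.1 else 0)
        - (if i2.1 = 0 then ipTheta l i1.1 i3.1 else 0) := by
    intro i1 i2 i3
    by_cases h1 : i1.1 = 0 <;> by_cases h2 : i2.1 = 0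
    · rw [if_pos h1, if_pos h2]
      have e1 : i1 = i2 := Fin.ext (by omega)
      rw [e1, hR12]; ring
    · rw [if_pos h1, if_neg h2, bcongr i1 0 hn4 h1, Rb0 i2 i3 h2]; ring
    · rw [if_neg h1, if_pos h2, hsym1, bcongr i2 0 hn4 h2, Rb0 i1 i3 h1]; ring
    · rw [if_neg h1, if_neg h2]
      have := hvanish i1 i2 i3 ⟨0, hn4⟩ (by rintro ⟨w1', w2', hA, -, -⟩; omega)
      rw [this]; ring
  -- vanishing when the last two slots avoid X
  have hK0 : ∀ (f1 f2 : Fin (2*l+4) → ℝ) (i3 i4 : Fin (2*l+4)), i3.1 ≠ 0 → i4.1 ≠ 0 →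
      R ![f1, f2, b i3, b i4] = 0 := by
    intro f1 f2 i3 i4 h3 h4
    rw [Rexp0]
    refine Finset.sum_eq_zero fun i1 _ => ?_
    have : R ![b i1, f2, b i3, b i4] = 0 := by
      rw [Rexp1]
      refine Finset.sum_eq_zero fun i2 _ => ?_
      have := hvanish i1 i2 i3 i4 (by rintro ⟨w1', w2', -, hB, -⟩; omega)
      rw [this, mul_zero]
    rw [this, mul_zero]
  -- the key structural identity
  have key : ∀ (f1 f2 y z : Fin (2*l+4) → ℝ),
      R ![f1, f2, y, z] =
        (∑ i, b.repr y i * R ![f1, f2, b i, b ⟨0, hn4⟩]) * b.repr z ⟨0, hn4⟩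
        - b.repr y ⟨0, hn4⟩ * (∑ i, b.repr z i * R ![f1, f2, b i, b ⟨0, hn4⟩]) := by
    intro f1 f2 y z
    have inner : ∀ i3 : Fin (2*l+4), R ![f1, f2, b i3, z] =
        R ![f1, f2, b i3, b ⟨0, hn4⟩] * b.repr z ⟨0, hn4⟩
        - (if i3.1 = 0 then (∑ i, b.repr z i * R ![f1, f2, b i, b ⟨0, hn4⟩]) else 0) := by
      intro i3
      by_cases h3 : i3.1 = 0
      · rw [if_pos h3, bcongr i3 0 hn4 h3]
        rw [Rexp3 f1 f2 (b ⟨0, hn4⟩) z]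
        have hterm : ∀ i4 : Fin (2*l+4), b.repr z i4 * R ![f1, f2, b ⟨0, hn4⟩, b i4]
            = -(b.repr z i4 * R ![f1, f2, b i4, b ⟨0, hn4⟩]) := by
          intro i4
          rw [hsym2 f1 f2 (b ⟨0, hn4⟩) (b i4)]; ring
        rw [Finset.sum_congr rfl (fun i4 _ => hterm i4), hR34, zero_mul, zero_sub,
          ← Finset.sum_neg_distrib]
      · rw [if_neg h3, sub_zero]
        rw [Rexp3 f1 f2 (b i3) z]
        have hterm : ∀ i4 : Fin (2*l+4), b.repr z i4 * R ![f1, f2, b i3, b i4]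
            = (fun j => b.repr z j * R ![f1, f2, b i3, b ⟨0, hn4⟩]) i4
              * (if i4.1 = 0 then (1:ℝ) else 0) := by
          intro i4
          by_cases h4 : i4.1 = 0
          · rw [if_pos h4, bcongr i4 0 hn4 h4, mul_one]
          · rw [if_neg h4, mul_zero, hK0 f1 f2 i3 i4 h3 h4, mul_zero]
        rw [Finset.sum_congr rfl (fun i4 _ => hterm i4),
          coll (fun j => b.repr z j * R ![f1, f2, b i3, b ⟨0, hn4⟩]) 0 hn4]
        ring
    rw [Rexp2 f1 f2 y z, Finset.sum_congr rfl (fun i3 _ => by rw [inner i3])]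
    have split : ∀ i3 : Fin (2*l+4), b.repr y i3 *
        (R ![f1, f2, b i3, b ⟨0, hn4⟩] * b.repr z ⟨0, hn4⟩
          - (if i3.1 = 0 then (∑ i, b.repr z i * R ![f1, f2, b i, b ⟨0, hn4⟩]) else 0))
        = (b.repr y i3 * R ![f1, f2, b i3, b ⟨0, hn4⟩]) * b.repr z ⟨0, hn4⟩
          - (fun j => b.repr y j * (∑ i, b.repr z i * R ![f1, f2, b i, b ⟨0, hn4⟩])) i3
            * (if i3.1 = 0 then (1:ℝ) else 0) := by
      intro i3; split_ifs <;> simp <;> ring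
    rw [Finset.sum_congr rfl (fun i3 _ => split i3), Finset.sum_sub_distrib, ← Finset.sum_mul,
      coll (fun j => b.repr y j * (∑ i, b.repr z i * R ![f1, f2, b i, b ⟨0, hn4⟩])) 0 hn4]
  -- ipD i is g-dual to the i-th coordinate
  have hgD : ∀ (i j : Fin (2*l+4)), g (b j) (ipD l b c i) = if j = i then 1 else 0 := by
    intro i j
    by_cases h0 : i.1 = 0
    · rw [ipD, if_pos h0, gY j]
      by_cases hj : j.1 = 0
      · rw [if_pos hj, if_pos (Fin.ext (by omega) : j = i)]
      · rw [if_neg hj, if_neg (fun h => hj (by rw [h]; exact h0))]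
    · by_cases hY : i.1 = 2*l+3
      · rw [ipD, if_neg h0, if_pos hY, map_sub, map_smul, smul_eq_mul, gX j, gY j]
        by_cases hj : j.1 = 0
        · rw [if_pos hj, if_pos hj, if_neg (fun h : j = i => by omega)]
          ring
        · rw [if_neg hj, if_neg hj, mul_zero, sub_zero]
          by_cases hj2 : j.1 = 2*l+3
          · rw [if_pos hj2, if_pos (Fin.ext (by omega) : j = i)]
          · rw [if_neg hj2, if_neg (fun h : j = i => by rw [h] at hj2; exact hj2 hY)]
      · by_cases hU : i.1 ≤ l+1
        · have e : ipD l b c i = b ⟨l+1+i.1, by omega⟩ := by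
            rw [ipD, if_neg h0, if_neg hY, dif_pos hU]
          rw [e, gV i.1 (by omega) hU j]
          by_cases hj : j.1 = i.1
          · rw [if_pos hj, if_pos (Fin.ext hj)]
          · rw [if_neg hj, if_neg (fun h : j = i => hj (by rw [h]))]
        · have e : ipD l b c i = b ⟨i.1 - (l+1), by omega⟩ := by
            rw [ipD, if_neg h0, if_neg hY, dif_neg hU]
          rw [e, gU (i.1 - (l+1)) (by omega) (by omega) j]
          by_cases hj : j.1 = l+1+(i.1-(l+1))
          · rw [if_pos hj, if_pos (Fin.ext (by omega) : j = i)]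
          · rw [if_neg hj, if_neg (fun h : j = i => hj (by rw [h]; omega))]
  -- repr of the zero coordinate via g
  have hPrepr : ∀ v : Fin (2*l+4) → ℝ, g v (b ⟨2*l+3, hnY⟩) = b.repr v ⟨0, hn4⟩ := by
    intro v
    rw [geval v (b ⟨2*l+3, hnY⟩)]
    simp only [gY]
    exact coll (fun j => b.repr v j) 0 hn4
  -- general dual property of q
  have hbqG : ∀ (f1 f2 : Fin (2*l+4) → ℝ) (j : Fin (2*l+4)),
      g (b j) (∑ i, R ![f1, f2, b i, b ⟨0, hn4⟩] • ipD l b c i)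
        = R ![f1, f2, b j, b ⟨0, hn4⟩] := by
    intro f1 f2 j
    rw [map_sum]
    have : ∀ i : Fin (2*l+4),
        g (b j) (R ![f1, f2, b i, b ⟨0, hn4⟩] • ipD l b c i)
        = R ![f1, f2, b i, b ⟨0, hn4⟩] * (if j = i then 1 else 0) := by
      intro i
      rw [map_smul, smul_eq_mul, hgD i j]
    rw [Finset.sum_congr rfl (fun i _ => this i)]
    rw [Finset.sum_eq_single j]
    · rw [if_pos rfl, mul_one]
    · intro i _ hij
      rw [if_neg (fun h => hij h.symm), mul_zero]
    · intro h; exact absurd (Finset.mem_univ _) h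
  -- master computation
  have master : ∀ (f1 f2 : Fin (2*l+4) → ℝ) (Rop : Module.End ℝ (Fin (2*l+4) → ℝ)),
      (∀ y z, g (Rop y) z = R ![f1, f2, y, z]) →
      (∀ y, Rop (Rop (Rop y)) = 0) ∧
      Rop (Rop (b ⟨0, hn4⟩)) =
        (-(g (∑ i, R ![f1, f2, b i, b ⟨0, hn4⟩] • ipD l b c i)
            (∑ i, R ![f1, f2, b i, b ⟨0, hn4⟩] • ipD l b c i))) • b ⟨2*l+3, hnY⟩ := by
    intro f1 f2 Rop hRop
    set q : Fin (2*l+4) → ℝ := ∑ i, R ![f1, f2, b i, b ⟨0, hn4⟩] • ipD l b c i with hq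
    have hbq : ∀ j : Fin (2*l+4), g (b j) q = R ![f1, f2, b j, b ⟨0, hn4⟩] := by
      intro j
      rw [hq, map_sum]
      have : ∀ i : Fin (2*l+4),
          g (b j) (R ![f1, f2, b i, b ⟨0, hn4⟩] • ipD l b c i)
          = R ![f1, f2, b i, b ⟨0, hn4⟩] * (if j = i then 1 else 0) := by
        intro i
        rw [map_smul, smul_eq_mul, hgD i j]
      rw [Finset.sum_congr rfl (fun i _ => this i)]
      rw [Finset.sum_eq_single j]
      · rw [if_pos rfl, mul_one]
      · intro i _ hij
        rw [if_neg (fun h => hij h.symm), mul_zero]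
      · intro h; exact absurd (Finset.mem_univ _) h
    have hgvq : ∀ v : Fin (2*l+4) → ℝ,
        g v q = ∑ i, b.repr v i * R ![f1, f2, b i, b ⟨0, hn4⟩] := by
      intro v
      rw [geval v q]
      exact Finset.sum_congr rfl fun i _ => by rw [hbq i]
    have hκY : R ![f1, f2, b ⟨2*l+3, hnY⟩, b ⟨0, hn4⟩] = 0 := by
      rw [Rexp0]
      refine Finset.sum_eq_zero fun i1 _ => ?_
      have : R ![b i1, f2, b ⟨2*l+3, hnY⟩, b ⟨0, hn4⟩] = 0 := by
        rw [Rexp1]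
        refine Finset.sum_eq_zero fun i2 _ => ?_
        have := hvanish i1 i2 ⟨2*l+3, hnY⟩ ⟨0, hn4⟩ (by
          rintro ⟨w1, w2, -, hB, hC⟩
          simp only [vmk] at hB
          rcases hC with ⟨hc1, hc2⟩ | ⟨a, ha1, ha2, hc⟩ <;> omega)
        rw [this, mul_zero]
      rw [this, mul_zero]
    have hYq : g (b ⟨2*l+3, hnY⟩) q = 0 := by rw [hbq]; exact hκY
    have hqY : g q (b ⟨2*l+3, hnY⟩) = 0 := by rw [hgsym]; exact hYq
    have hYY : g (b ⟨2*l+3, hnY⟩) (b ⟨2*l+3, hnY⟩) = 0 := by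
      have := gY ⟨2*l+3, hnY⟩
      rwa [if_neg (by simp only [vmk]; omega)] at this
    have hA : ∀ y z : Fin (2*l+4) → ℝ,
        g (Rop y) z = g y q * g z (b ⟨2*l+3, hnY⟩) - g y (b ⟨2*l+3, hnY⟩) * g z q := by
      intro y z
      rw [hRop y z, key f1 f2 y z, ← hgvq y, ← hgvq z, ← hPrepr z, ← hPrepr y]
    have hRy : ∀ y : Fin (2*l+4) → ℝ,
        Rop y = g y q • b ⟨2*l+3, hnY⟩ - g y (b ⟨2*l+3, hnY⟩) • q := by
      intro y
      have hz : ∀ w, g (Rop y - (g y q • b ⟨2*l+3, hnY⟩ - g y (b ⟨2*l+3, hnY⟩) • q)) w = 0 := by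
        intro w
        rw [map_sub, LinearMap.sub_apply, hA y w, map_sub, LinearMap.sub_apply,
          map_smul, LinearMap.smul_apply, map_smul, LinearMap.smul_apply,
          smul_eq_mul, smul_eq_mul, hgsym (b ⟨2*l+3, hnY⟩) w, hgsym q w]
        ring
      exact sub_eq_zero.mp (nondeg _ hz)
    have hgRopY : ∀ y : Fin (2*l+4) → ℝ, g (Rop y) (b ⟨2*l+3, hnY⟩) = 0 := by
      intro y
      rw [hA y (b ⟨2*l+3, hnY⟩), hYY, hYq]
      ring
    have hRop2 : ∀ y : Fin (2*l+4) → ℝ,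
        Rop (Rop y) = (-(g y (b ⟨2*l+3, hnY⟩)) * g q q) • b ⟨2*l+3, hnY⟩ := by
      intro y
      rw [hRy (Rop y), hgRopY y, zero_smul, sub_zero, hA y q, hqY]
      ring_nf
    constructor
    · intro y
      rw [hRop2 (Rop y), hgRopY y, neg_zero, zero_mul, zero_smul]
    · rw [hRop2 (b ⟨0, hn4⟩)]
      have h1 : g (b ⟨0, hn4⟩) (b ⟨2*l+3, hnY⟩) = 1 := hgXY
      rw [h1, neg_one_mul]
  constructor
  · -- part 1 : cubic nilpotency for every pair
    rintro f1 f2 - - - Rop hRop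
    apply LinearMap.ext
    intro y
    have h := (master f1 f2 Rop hRop).1 y
    simp only [pow_succ, pow_zero, one_mul, Module.End.mul_apply, LinearMap.zero_apply]
    exact h
  · -- part 2 : an explicit pair with nonvanishing square
    have h2lt : (2:ℕ) < 2*l+4 := by omega
    have hl3lt : l+3 < 2*l+4 := by omega
    set F1 : Fin (2*l+4) → ℝ := b ⟨0, hn4⟩ + (-(c-1)/2) • b ⟨2*l+3, hnY⟩ with hF1
    set F2 : Fin (2*l+4) → ℝ := b ⟨2, h2lt⟩ + (1/2 : ℝ) • b ⟨l+3, hl3lt⟩ with hF2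
    have gYX : g (b ⟨2*l+3, hnY⟩) (b ⟨0, hn4⟩) = 1 := by rw [hgsym]; exact hgXY
    have gYY : g (b ⟨2*l+3, hnY⟩) (b ⟨2*l+3, hnY⟩) = 0 := by
      have := gY ⟨2*l+3, hnY⟩
      rwa [if_neg (by simp only [vmk]; omega)] at this
    have gXU2 : g (b ⟨0, hn4⟩) (b ⟨2, h2lt⟩) = 0 := hg0 _ _ (by simp only [vmk]; omega)
    have gXV2 : g (b ⟨0, hn4⟩) (b ⟨l+3, hl3lt⟩) = 0 := hg0 _ _ (by simp only [vmk]; omega)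
    have gYU2 : g (b ⟨2*l+3, hnY⟩) (b ⟨2, h2lt⟩) = 0 := hg0 _ _ (by simp only [vmk]; omega)
    have gYV2 : g (b ⟨2*l+3, hnY⟩) (b ⟨l+3, hl3lt⟩) = 0 := hg0 _ _ (by simp only [vmk]; omega)
    have gU2U2 : g (b ⟨2, h2lt⟩) (b ⟨2, h2lt⟩) = 0 := hg0 _ _ (by simp only [vmk]; omega)
    have gV2V2 : g (b ⟨l+3, hl3lt⟩) (b ⟨l+3, hl3lt⟩) = 0 := hg0 _ _ (by simp only [vmk]; omega)
    have gU2V2 : g (b ⟨2, h2lt⟩) (b ⟨l+3, hl3lt⟩) = 1 := by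
      have h := hgUV 2 2 (by omega) (by omega) (by omega) (by omega)
      rw [if_pos rfl] at h
      have e : (⟨l+1+2, by omega⟩ : Fin (2*l+4)) = ⟨l+3, hl3lt⟩ := Fin.ext (by simp only [vmk]; try omega)
      rwa [e] at h
    have gV2U2 : g (b ⟨l+3, hl3lt⟩) (b ⟨2, h2lt⟩) = 1 := by rw [hgsym]; exact gU2V2
    refine ⟨F1, F2, Or.inl ?_, Or.inl ?_, ?_, ?_⟩
    · rw [hF1]
      simp only [map_add, map_smul, LinearMap.add_apply, LinearMap.smul_apply, smul_eq_mul,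
        hgXX, hgXY, gYX, gYY]
      ring
    · rw [hF2]
      simp only [map_add, map_smul, LinearMap.add_apply, LinearMap.smul_apply, smul_eq_mul,
        gU2U2, gU2V2, gV2U2, gV2V2]
      ring
    · rw [hF1, hF2]
      simp only [map_add, map_smul, LinearMap.add_apply, LinearMap.smul_apply, smul_eq_mul,
        gXU2, gXV2, gYU2, gYV2]
      ring
    · intro Rop hRop
      have h2 := (master F1 F2 Rop hRop).2
      -- the values of R ![F1,F2,b i,X]
      have hκval : ∀ i : Fin (2*l+4), R ![F1, F2, b i, b ⟨0, hn4⟩]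
          = ipTheta l 2 i.1 + (1/2) * ipTheta l (l+3) i.1 := by
        intro i
        have hT1 := Rb0 ⟨2, h2lt⟩ i (by simp only [vmk]; omega)
        have hT2 := Rb0 ⟨l+3, hl3lt⟩ i (by simp only [vmk]; omega)
        simp only [vmk] at hT1 hT2
        have hT3 : R ![b ⟨2*l+3, hnY⟩, b ⟨2, h2lt⟩, b i, b ⟨0, hn4⟩] = 0 := by
          refine hvanish _ _ _ _ ?_
          rintro ⟨w1, w2, hA, -, -⟩
          simp only [vmk] at hA
          omega
        have hT4 : R ![b ⟨2*l+3, hnY⟩, b ⟨l+3, hl3lt⟩, b i, b ⟨0, hn4⟩] = 0 := by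
          refine hvanish _ _ _ _ ?_
          rintro ⟨w1, w2, hA, -, -⟩
          simp only [vmk] at hA
          omega
        rw [hF1, hF2]
        simp only [Radd0, Radd1, Rsmul0, Rsmul1]
        rw [hT1, hT2, hT3, hT4]
        ring
      -- the summand of g q q
      have th2 : ∀ m, ipTheta l 2 m = if m=1 ∨ m=2 ∨ (m=3 ∧ 2≤l) ∨ m=l+2 then 1 else 0 := by
        intro m
        by_cases h : m=1 ∨ m=2 ∨ (m=3 ∧ 2≤l) ∨ m=l+2
        · rw [if_pos h, ipTheta, if_pos (by omega)]
        · rw [if_neg h, ipTheta, if_neg (by omega)]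
      have thl3 : ∀ m, ipTheta l (l+3) m = if m=3 ∧ 2≤l then 1 else 0 := by
        intro m
        by_cases h : m=3 ∧ 2≤l
        · rw [if_pos h, ipTheta, if_pos (by omega)]
        · rw [if_neg h, ipTheta, if_neg (by omega)]
      have hκ0 : R ![F1, F2, b ⟨0, hn4⟩, b ⟨0, hn4⟩] = 0 := hR34 F1 F2 (b ⟨0, hn4⟩)
      have hκY : R ![F1, F2, b ⟨2*l+3, hnY⟩, b ⟨0, hn4⟩] = 0 := by
        rw [hκval ⟨2*l+3, hnY⟩]
        simp only [vmk]
        rw [th2 (2*l+3), thl3 (2*l+3), if_neg (by omega), if_neg (by omega)]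
        norm_num
      have hsummand : ∀ i : Fin (2*l+4),
          g (R ![F1, F2, b i, b ⟨0, hn4⟩] • ipD l b c i)
            (∑ i', R ![F1, F2, b i', b ⟨0, hn4⟩] • ipD l b c i')
          = (if i.1 = 1 then (1:ℝ) else 0) + (if i.1 = l+2 then (1:ℝ) else 0) := by
        intro i
        rw [map_smul, LinearMap.smul_apply, smul_eq_mul]
        by_cases h0 : i.1 = 0
        · rw [ipD, if_pos h0, hbqG F1 F2 ⟨2*l+3, hnY⟩, hκY, mul_zero,
            if_neg (by omega), if_neg (by omega)]
          norm_num
        · by_cases hY2 : i.1 = 2*l+3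
          · rw [ipD, if_neg h0, if_pos hY2, map_sub, LinearMap.sub_apply,
              map_smul, LinearMap.smul_apply, smul_eq_mul,
              hbqG F1 F2 ⟨0, hn4⟩, hbqG F1 F2 ⟨2*l+3, hnY⟩, hκ0, hκY,
              if_neg (by omega), if_neg (by omega)]
            ring
          · by_cases hU : i.1 ≤ l+1
            · have e : ipD l b c i = b ⟨l+1+i.1, by omega⟩ := by
                rw [ipD, if_neg h0, if_neg hY2, dif_pos hU]
              rw [e, hbqG F1 F2 ⟨l+1+i.1, by omega⟩, hκval i, hκval ⟨l+1+i.1, by omega⟩]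
              simp only [vmk]
              rw [th2 i.1, th2 (l+1+i.1), thl3 i.1, thl3 (l+1+i.1)]
              split_ifs <;> first | omega | norm_num
            · have e : ipD l b c i = b ⟨i.1 - (l+1), by omega⟩ := by
                rw [ipD, if_neg h0, if_neg hY2, dif_neg hU]
              rw [e, hbqG F1 F2 ⟨i.1 - (l+1), by omega⟩, hκval i, hκval ⟨i.1 - (l+1), by omega⟩]
              simp only [vmk]
              rw [th2 i.1, th2 (i.1 - (l+1)), thl3 i.1, thl3 (i.1 - (l+1))]
              split_ifs <;> first | omega | norm_num
      have hgqq : g (∑ i, R ![F1, F2, b i, b ⟨0, hn4⟩] • ipD l b c i)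
          (∑ i, R ![F1, F2, b i, b ⟨0, hn4⟩] • ipD l b c i) = 2 := by
        have h1 : g (∑ i, R ![F1, F2, b i, b ⟨0, hn4⟩] • ipD l b c i)
            = ∑ i, g (R ![F1, F2, b i, b ⟨0, hn4⟩] • ipD l b c i) :=
          map_sum g _ Finset.univ
        rw [h1, LinearMap.sum_apply,
          Finset.sum_congr rfl (fun i _ => hsummand i), Finset.sum_add_distrib,
          coll1 1 (by omega), coll1 (l+2) (by omega)]
        norm_num
      rw [hgqq] at h2
      intro hcontra
      have hzero : Rop (Rop (b ⟨0, hn4⟩)) = 0 := by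
        have : (Rop^2) (b ⟨0, hn4⟩) = 0 := by rw [hcontra]; rfl
        rwa [pow_two, Module.End.mul_apply] at this
      rw [hzero] at h2
      have hbne := b.ne_zero ⟨2*l+3, hnY⟩
      rcases smul_eq_zero.mp h2.symm with h | h
      · norm_num at h
      · exact hbne h
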